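/- Let u, ũ ∈ ℝ³ be unit vectors with u ≠ ũ (so ρ(u), ρ(ũ) are pure one-qubit states), let q ∈ ℝ³ be a unit vector, and let r ∈ (0,1). Then the following are equivalent: (1) D(ρ(u)‖ρ(r·q)) = D(ρ(ũ)‖ρ(r·q)); (2) ⟨q, u − ũ⟩ = 0; (3) ‖q − u‖ = ‖q − ũ‖ (Euclidean distance in ℝ³). Consequently, for one-qubit pure states the Voronoi bisector obtained as the limit of divergence bisectors, the geodesic bisector on the Bloch sphere, and the section of the Euclidean bisector with the sphere all coincide. -/
import Mathlib

open scoped ComplexOrder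

noncomputable def matLog {n : Type*} [Fintype n] [DecidableEq n]
    (A : Matrix n n ℂ) : Matrix n n ℂ := cfc Real.log A

noncomputable def qDiv {n : Type*} [Fintype n] [DecidableEq n]
    (σ ρ : Matrix n n ℂ) : ℝ := (Matrix.trace (σ * (matLog σ - matLog ρ))).re

noncomputable def rho2 (v : Fin 3 → ℝ) : Matrix (Fin 2) (Fin 2) ℂ :=
  !![((1 + v 2) / 2 : ℂ), ((v 0 : ℂ) - Complex.I * (v 1 : ℂ)) / 2;
     ((v 0 : ℂ) + Complex.I * (v 1 : ℂ)) / 2, ((1 - v 2) / 2 : ℂ)]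

lemma rho2_sa (v : Fin 3 → ℝ) : IsSelfAdjoint (rho2 v) := by
  show star (rho2 v) = rho2 v
  ext i j
  fin_cases i <;> fin_cases j <;>
    simp [rho2, Matrix.star_apply, Complex.ext_iff]

lemma spec_det {A : Matrix (Fin 2) (Fin 2) ℂ} {x : ℝ} (hx : x ∈ spectrum ℝ A) :
    ((x:ℂ) - A 0 0) * ((x:ℂ) - A 1 1) - A 0 1 * A 1 0 = 0 := by
  rw [spectrum.mem_iff] at hx
  by_contra h
  apply hx
  rw [Matrix.isUnit_iff_isUnit_det, isUnit_iff_ne_zero, Matrix.det_fin_two]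
  convert h using 2 <;>
    simp [Matrix.algebraMap_eq_diagonal, Matrix.diagonal, Matrix.sub_apply]

lemma spec_pure {u : Fin 3 → ℝ} (hu : u 0 ^ 2 + u 1 ^ 2 + u 2 ^ 2 = 1)
    {x : ℝ} (hx : x ∈ spectrum ℝ (rho2 u)) : x = 0 ∨ x = 1 := by
  have h := spec_det hx
  simp only [rho2, Matrix.cons_val_zero, Matrix.cons_val_one, Matrix.head_cons,
    Matrix.cons_val', Matrix.empty_val', Matrix.cons_val_fin_one, Matrix.of_apply,
    Matrix.vecHead, Matrix.vecTail] at h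
  have hu' : (u 0 : ℂ)^2 + (u 1 : ℂ)^2 + (u 2 : ℂ)^2 = 1 := by exact_mod_cast hu
  have h2 : (x:ℂ) * ((x:ℂ) - 1) = 0 := by
    linear_combination h + (1/4 : ℂ) * hu' - ((u 1 : ℂ)^2/4) * Complex.I_sq
  rcases mul_eq_zero.1 h2 with h3 | h3
  · exact Or.inl (by exact_mod_cast h3)
  · right
    have h4 : (x:ℂ) = 1 := by linear_combination h3
    exact_mod_cast h4

lemma spec_mixed {q : Fin 3 → ℝ} (hq : q 0 ^ 2 + q 1 ^ 2 + q 2 ^ 2 = 1)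
    {r : ℝ} {x : ℝ} (hx : x ∈ spectrum ℝ (rho2 (fun i => r * q i))) :
    x = (1 + r) / 2 ∨ x = (1 - r) / 2 := by
  have h := spec_det hx
  simp only [rho2, Matrix.cons_val_zero, Matrix.cons_val_one, Matrix.head_cons,
    Matrix.cons_val', Matrix.empty_val', Matrix.cons_val_fin_one, Matrix.of_apply,
    Matrix.vecHead, Matrix.vecTail] at h
  push_cast at h
  have hq' : (q 0 : ℂ)^2 + (q 1 : ℂ)^2 + (q 2 : ℂ)^2 = 1 := by exact_mod_cast hq
  have h2 : ((x:ℂ) - (1 + r) / 2) * ((x:ℂ) - (1 - r) / 2) = 0 := by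
    linear_combination h + ((r:ℂ)^2/4) * hq' - ((r:ℂ)^2 * (q 1 : ℂ)^2/4) * Complex.I_sq
  rcases mul_eq_zero.1 h2 with h3 | h3
  · left
    have h4 : (x:ℂ) = ((1 + r)/2 : ℝ) := by push_cast; linear_combination h3
    exact_mod_cast h4
  · right
    have h4 : (x:ℂ) = ((1 - r)/2 : ℝ) := by push_cast; linear_combination h3
    exact_mod_cast h4

lemma matLog_pure {u : Fin 3 → ℝ} (hu : u 0 ^ 2 + u 1 ^ 2 + u 2 ^ 2 = 1) :
    matLog (rho2 u) = 0 := by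
  unfold matLog
  have h : cfc Real.log (rho2 u) = cfc (fun _ : ℝ => (0:ℝ)) (rho2 u) := by
    apply cfc_congr
    intro x hx
    rcases spec_pure hu hx with h | h <;> simp [h]
  rw [h, cfc_const 0 _ (rho2_sa u), map_zero]

lemma matLog_affine (c d : ℝ) {v : Fin 3 → ℝ}
    (h : ∀ x ∈ spectrum ℝ (rho2 v), Real.log x = c + d * x) :
    matLog (rho2 v) = (c : ℂ) • 1 + (d : ℝ) • rho2 v := by
  unfold matLog
  rw [cfc_congr (a := rho2 v) (g := fun x : ℝ => c + d * x) h]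
  rw [cfc_add (a := rho2 v) (fun _ : ℝ => c) (fun x : ℝ => d * x),
    cfc_const c _ (rho2_sa v), cfc_const_mul d (fun x : ℝ => x) (rho2 v),
    cfc_id' ℝ (rho2 v) (rho2_sa v)]
  congr 1
  ext i j
  simp [Matrix.algebraMap_eq_diagonal, Matrix.diagonal, Matrix.one_apply]

lemma trace_rho2 (v : Fin 3 → ℝ) : Matrix.trace (rho2 v) = 1 := by
  simp [rho2, Matrix.trace_fin_two]
  ring

lemma trace_rho2_mul (v w : Fin 3 → ℝ) :
    Matrix.trace (rho2 v * rho2 w) =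
      (((1 + (v 0 * w 0 + v 1 * w 1 + v 2 * w 2)) / 2 : ℝ) : ℂ) := by
  simp only [rho2, Matrix.trace_fin_two, Matrix.mul_apply, Fin.sum_univ_two,
    Matrix.cons_val_zero, Matrix.cons_val_one, Matrix.head_cons,
    Matrix.cons_val', Matrix.empty_val', Matrix.cons_val_fin_one, Matrix.of_apply,
    Matrix.vecHead, Matrix.vecTail]
  push_cast
  linear_combination (-(v 1 : ℂ) * (w 1 : ℂ) / 2) * Complex.I_sq

lemma qDiv_val {u : Fin 3 → ℝ} (hu : u 0 ^ 2 + u 1 ^ 2 + u 2 ^ 2 = 1)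
    (w : Fin 3 → ℝ) (c d : ℝ)
    (hlog : matLog (rho2 w) = (c : ℂ) • 1 + (d : ℝ) • rho2 w) :
    qDiv (rho2 u) (rho2 w) =
      -(c + d * ((1 + (u 0 * w 0 + u 1 * w 1 + u 2 * w 2)) / 2)) := by
  unfold qDiv
  rw [matLog_pure hu, hlog, zero_sub, mul_neg, Matrix.trace_neg, mul_add,
    Matrix.trace_add, mul_smul_comm, mul_smul_comm, Matrix.mul_one,
    Matrix.trace_smul, Matrix.trace_smul, trace_rho2, trace_rho2_mul]
  have : ((c:ℂ) • (1:ℂ) + (d:ℝ) • (((1 + (u 0 * w 0 + u 1 * w 1 + u 2 * w 2)) / 2 : ℝ) : ℂ))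
      = ((c + d * ((1 + (u 0 * w 0 + u 1 * w 1 + u 2 * w 2)) / 2) : ℝ) : ℂ) := by
    push_cast [Complex.real_smul, smul_eq_mul]
    ring
  rw [this, ← Complex.ofReal_neg, Complex.ofReal_re]

theorem one_qubit_bisectors_coincide
    (u u' q : Fin 3 → ℝ)
    (hu : u 0 ^ 2 + u 1 ^ 2 + u 2 ^ 2 = 1)
    (hu' : u' 0 ^ 2 + u' 1 ^ 2 + u' 2 ^ 2 = 1)
    (hne : u ≠ u')
    (hq : q 0 ^ 2 + q 1 ^ 2 + q 2 ^ 2 = 1)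
    (r : ℝ) (hr0 : 0 < r) (hr1 : r < 1) :
    (qDiv (rho2 u) (rho2 (fun i => r * q i)) =
        qDiv (rho2 u') (rho2 (fun i => r * q i)) ↔
      q 0 * (u 0 - u' 0) + q 1 * (u 1 - u' 1) + q 2 * (u 2 - u' 2) = 0) ∧
    (q 0 * (u 0 - u' 0) + q 1 * (u 1 - u' 1) + q 2 * (u 2 - u' 2) = 0 ↔
      Real.sqrt ((q 0 - u 0) ^ 2 + (q 1 - u 1) ^ 2 + (q 2 - u 2) ^ 2) =
        Real.sqrt ((q 0 - u' 0) ^ 2 + (q 1 - u' 1) ^ 2 + (q 2 - u' 2) ^ 2)) := by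
  have hrne : r ≠ 0 := ne_of_gt hr0
  set α := Real.log ((1 + r) / 2) with hα
  set β := Real.log ((1 - r) / 2) with hβ
  set d := (α - β) / r with hd
  set c := (α + β) / 2 - d / 2 with hc
  have hαβ : β < α := by
    apply Real.log_lt_log (by linarith) (by linarith)
  have hdpos : 0 < d := div_pos (by linarith) hr0
  have hlog : matLog (rho2 (fun i => r * q i)) =
      (c : ℂ) • 1 + (d : ℝ) • rho2 (fun i => r * q i) := by
    apply matLog_affine
    intro x hx
    rcases spec_mixed hq hx with h | h <;> subst h
    · rw [← hα, hc, hd]; field_simp; ring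
    · rw [← hβ, hc, hd]; field_simp; ring
  have Du := qDiv_val hu (fun i => r * q i) c d hlog
  have Du' := qDiv_val hu' (fun i => r * q i) c d hlog
  constructor
  · rw [Du, Du']
    constructor
    · intro hEq
      have h0 : d * (r * ((u 0 * q 0 + u 1 * q 1 + u 2 * q 2)
          - (u' 0 * q 0 + u' 1 * q 1 + u' 2 * q 2))) = 0 := by
        linear_combination (-2 : ℝ) * hEq
      rcases mul_eq_zero.1 h0 with h | h
      · exact absurd h (ne_of_gt hdpos)
      rcases mul_eq_zero.1 h with h | h
      · exact absurd h hrne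
      linear_combination h
    · intro hdot
      linear_combination (-(d * r) / 2) * hdot
  · rw [Real.sqrt_inj (by positivity) (by positivity)]
    constructor
    · intro hdot
      linear_combination hu - hu' - 2 * hdot
    · intro hsum
      linear_combination (1/2 : ℝ) * hu - (1/2 : ℝ) * hu' - (1/2 : ℝ) * hsum
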